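/- Let 𝒜 ⊆ M_n(ℝ) be a unital matrix algebra, n ≥ 2. If 𝒜 contains a matrix with a real eigenvalue of algebraic multiplicity 1, then 𝒜 contains an idempotent matrix of rank 1. -/

import Mathlib

open Matrix Polynomial

lemma aux_charpoly_comp_shift {n : ℕ} (A : Matrix (Fin n) (Fin n) ℝ) (lam : ℝ) :
    (Matrix.charpoly A).comp (X + C lam) = Matrix.charpoly (A - lam • 1) := by
  have hcoe : ∀ p : ℝ[X],
      ((aeval (R := ℝ) (X + C lam) : ℝ[X] →ₐ[ℝ] ℝ[X]) : ℝ[X] →+* ℝ[X]) p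
        = p.comp (X + C lam) := by
    intro p
    show aeval (X + C lam) p = p.comp (X + C lam)
    rw [Polynomial.comp, aeval_def, Polynomial.algebraMap_eq]
  have hmap : (charmatrix A).map (fun p => p.comp (X + C lam))
      = charmatrix (A - lam • 1) := by
    ext i j
    by_cases h : i = j
    · subst h
      simp [charmatrix_apply_eq, Matrix.sub_apply, Matrix.smul_apply, one_apply_eq, C_sub, sub_comp]
      ring
    · simp [charmatrix_apply_ne _ _ _ h, Matrix.sub_apply, Matrix.smul_apply, one_apply_ne h]
  have hdet := RingHom.map_det
    ((aeval (R := ℝ) (X + C lam) : ℝ[X] →ₐ[ℝ] ℝ[X]) : ℝ[X] →+* ℝ[X]) (charmatrix A)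
  rw [Matrix.charpoly, Matrix.charpoly, ← hmap]
  simp only [← hcoe]
  rw [hdet, RingHom.mapMatrix_apply]

lemma aux_ker_dim_le {n : ℕ} (A : Matrix (Fin n) (Fin n) ℝ) (lam : ℝ)
    (h : (Matrix.charpoly A).rootMultiplicity lam = 1) :
    Module.finrank ℝ (LinearMap.ker (A - lam • 1).mulVecLin) ≤ 1 := by
  set ψ : Module.End ℝ (Fin n → ℝ) := (A - lam • 1).mulVecLin with hψ
  have hch : ψ.charpoly = Matrix.charpoly (A - lam • 1) := by
    rw [← LinearMap.charpoly_toMatrix ψ (Pi.basisFun ℝ (Fin n)),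
        LinearMap.toMatrix_eq_toMatrix']
    rw [hψ, ← Matrix.toLin'_apply', LinearMap.toMatrix'_toLin']
  have hle : LinearMap.ker ψ ≤ ψ.maxGenEigenspace 0 := by
    intro x hx
    rw [Module.End.mem_maxGenEigenspace]
    exact ⟨1, by simpa using hx⟩
  have hdim := Submodule.finrank_mono hle
  rw [LinearMap.finrank_maxGenEigenspace_zero_eq, hch, ← aux_charpoly_comp_shift,
      ← rootMultiplicity_eq_natTrailingDegree, h] at hdim
  exact hdim

lemma aux_aeval_mem {n : ℕ} (𝒜 : Subalgebra ℝ (Matrix (Fin n) (Fin n) ℝ))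
    {A : Matrix (Fin n) (Fin n) ℝ} (hA : A ∈ 𝒜) (p : ℝ[X]) : aeval A p ∈ 𝒜 := by
  have h1 : Algebra.adjoin ℝ ({A} : Set (Matrix (Fin n) (Fin n) ℝ)) ≤ 𝒜 :=
    Algebra.adjoin_le (by simpa using hA)
  exact h1 (Polynomial.aeval_mem_adjoin_singleton ℝ A)

/-- If a unital matrix algebra `𝒜 ⊆ Mₙ(ℝ)`, `n ≥ 2`, contains a matrix with a real
eigenvalue of algebraic multiplicity `1`, then `𝒜` contains a rank-one idempotent. -/
theorem stmt7 (n : ℕ) (hn : 2 ≤ n) (𝒜 : Subalgebra ℝ (Matrix (Fin n) (Fin n) ℝ))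
    (hev : ∃ A ∈ 𝒜, ∃ lam : ℝ, (Matrix.charpoly A).rootMultiplicity lam = 1) :
    ∃ E ∈ 𝒜, E * E = E ∧ Matrix.rank E = 1 := by
  obtain ⟨A, hA, lam, hmult⟩ := hev
  have hpmonic : (Matrix.charpoly A).Monic := Matrix.charpoly_monic A
  have hp0 : Matrix.charpoly A ≠ 0 := hpmonic.ne_zero
  -- factorization charpoly = (X - lam) * g with g lam ≠ 0
  have key := (Matrix.charpoly A).pow_mul_divByMonic_rootMultiplicity_eq lam
  have key2 := eval_divByMonic_pow_rootMultiplicity_ne_zero lam hp0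
  rw [hmult, pow_one] at key key2
  set g : ℝ[X] := Matrix.charpoly A /ₘ (X - C lam) with hg
  have hfac : (X - C lam) * g = Matrix.charpoly A := key
  have hgeval : g.eval lam ≠ 0 := key2
  -- coprime
  have hcop : IsCoprime (X - C lam) g :=
    ((irreducible_X_sub_C lam).coprime_iff_not_dvd).mpr
      (fun hdvd => hgeval (by simpa using (dvd_iff_isRoot.mp hdvd)))
  obtain ⟨u, v, huv⟩ := hcop
  -- the idempotent
  set E : Matrix (Fin n) (Fin n) ℝ := aeval A (v * g) with hE
  have hEmem : E ∈ 𝒜 := aux_aeval_mem 𝒜 hA _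
  have hCH : aeval A (Matrix.charpoly A) = 0 := Matrix.aeval_self_charpoly A
  set L : Matrix (Fin n) (Fin n) ℝ := A - lam • 1 with hL
  have hXsub : aeval A (X - C lam) = L := by
    rw [hL]
    simp [Algebra.algebraMap_eq_smul_one]
  have hLE : L * E = 0 := by
    rw [← hXsub, hE, ← _root_.map_mul,
      show (X - C lam) * (v * g) = v * ((X - C lam) * g) from by ring, hfac,
      _root_.map_mul, hCH, mul_zero]
  have h1 : aeval A (u * (X - C lam)) + E = 1 := by
    rw [hE, ← _root_.map_add, huv, _root_.map_one]
  have h2 : E * aeval A (u * (X - C lam)) = 0 := by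
    rw [hE, ← _root_.map_mul,
      show v * g * (u * (X - C lam)) = (u * v) * ((X - C lam) * g) from by ring, hfac,
      _root_.map_mul, hCH, mul_zero]
  have hidem : E * E = E := by
    calc E * E = E * (aeval A (u * (X - C lam)) + E) - E * aeval A (u * (X - C lam)) := by
          rw [mul_add, add_sub_cancel_left]
    _ = E * 1 - 0 := by rw [h1, h2]
    _ = E := by rw [mul_one, sub_zero]
  -- E acts as identity on ker L
  have hfix : ∀ w : Fin n → ℝ, L *ᵥ w = 0 → E *ᵥ w = w := by
    intro w hw
    have hE1 : E = 1 - aeval A u * L := by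
      rw [hE, show v * g = 1 - u * (X - C lam) from by linear_combination huv,
        _root_.map_sub, _root_.map_one, _root_.map_mul, hXsub]
    rw [hE1, Matrix.sub_mulVec, Matrix.one_mulVec, ← Matrix.mulVec_mulVec, hw,
      Matrix.mulVec_zero, sub_zero]
  -- range E = ker L
  have hrange : LinearMap.range E.mulVecLin = LinearMap.ker L.mulVecLin := by
    apply le_antisymm
    · rintro x ⟨y, rfl⟩
      simp only [LinearMap.mem_ker, mulVecLin_apply, Matrix.mulVec_mulVec, hLE,
        Matrix.zero_mulVec]
    · intro w hw
      exact ⟨w, hfix w (by simpa using hw)⟩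
  -- lam is a root, so L has nontrivial kernel
  have hroot : (Matrix.charpoly A).IsRoot lam := by
    rw [← rootMultiplicity_pos hp0, hmult]; norm_num
  have hmap2 : (charmatrix A).map (eval lam) = lam • (1 : Matrix (Fin n) (Fin n) ℝ) - A := by
    ext i j
    by_cases h : i = j
    · subst h
      simp [charmatrix_apply_eq, Matrix.sub_apply, Matrix.smul_apply, one_apply_eq]
    · simp [charmatrix_apply_ne _ _ _ h, Matrix.sub_apply, Matrix.smul_apply, one_apply_ne h]
  have hdet2 : (Matrix.charpoly A).eval lam
      = (lam • (1 : Matrix (Fin n) (Fin n) ℝ) - A).det := by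
    have hh := RingHom.map_det (evalRingHom lam) (charmatrix A)
    rw [Matrix.charpoly]
    rw [show ((evalRingHom lam) (charmatrix A).det) = (charmatrix A).det.eval lam from rfl] at hh
    rw [hh, RingHom.mapMatrix_apply]
    congr 1
  have hdetL : L.det = 0 := by
    have hLeq : L = -(lam • (1 : Matrix (Fin n) (Fin n) ℝ) - A) := by rw [hL, neg_sub]
    rw [hLeq, Matrix.det_neg, ← hdet2, hroot.eq_zero, mul_zero]
  obtain ⟨w, hw0, hww⟩ := Matrix.exists_mulVec_eq_zero_iff.mpr hdetL
  -- rank computation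
  have hker_le := aux_ker_dim_le A lam hmult
  rw [← hL] at hker_le
  have hker_ge : 1 ≤ Module.finrank ℝ (LinearMap.ker L.mulVecLin) := by
    rw [Nat.one_le_iff_ne_zero]
    intro hcontra
    have hbot : LinearMap.ker L.mulVecLin = ⊥ := Submodule.finrank_eq_zero.mp hcontra
    have hwmem : w ∈ LinearMap.ker L.mulVecLin := by
      simp only [LinearMap.mem_ker, mulVecLin_apply]; exact hww
    rw [hbot, Submodule.mem_bot] at hwmem
    exact hw0 hwmem
  refine ⟨E, hEmem, hidem, ?_⟩
  rw [Matrix.rank, hrange]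
  omega
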